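/- For all n ≥ 1, the number of triangulations of a convex (2n+2)-gon with vertices labeled 0, 1, ..., 2n+1 that contain none of the diagonals {i, 2n+3-i mod (2n+2)} for 2 ≤ i ≤ n (i.e., no diagonal parallel to the side {0,1}) equals 2 * C_{2n-1}, where C_m denotes the m-th Catalan number. -/

import Mathlib

/-- `e` is a diagonal of a convex `m`-gon with vertices `0, …, m-1`:
an ordered pair `(a, b)` with `a < b < m` joining two non-adjacent vertices. -/
def IsPolygonDiagonal (m : ℕ) (e : ℕ × ℕ) : Prop :=
  e.1 < e.2 ∧ e.2 < m ∧ e.1 + 2 ≤ e.2 ∧ ¬(e.1 = 0 ∧ e.2 = m - 1)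

/-- Two diagonals (each given as an increasing pair) of a convex polygon cross
in their interiors. -/
def DiagonalsCross (e f : ℕ × ℕ) : Prop :=
  (e.1 < f.1 ∧ f.1 < e.2 ∧ e.2 < f.2) ∨ (f.1 < e.1 ∧ e.1 < f.2 ∧ f.2 < e.2)

/-- A triangulation of a convex `m`-gon: a (maximal) set of `m - 3` pairwise
non-crossing diagonals. -/
def IsTriangulation (m : ℕ) (T : Finset (ℕ × ℕ)) : Prop :=
  (∀ e ∈ T, IsPolygonDiagonal m e) ∧
  (∀ e ∈ T, ∀ f ∈ T, ¬ DiagonalsCross e f) ∧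
  T.card = m - 3

namespace AvoidParallel
open Finset
open scoped Classical
noncomputable section

def Diag (S : Finset ℕ) (e : ℕ × ℕ) : Prop :=
  e.1 ∈ S ∧ e.2 ∈ S ∧ (∃ c ∈ S, e.1 < c ∧ c < e.2) ∧
    ((∃ c ∈ S, c < e.1) ∨ (∃ c ∈ S, e.2 < c))

lemma Diag.lt {S e} (h : Diag S e) : e.1 < e.2 := by
  obtain ⟨-, -, ⟨c, -, h1, h2⟩, -⟩ := h; omega

def IsTri (S : Finset ℕ) (T : Finset (ℕ × ℕ)) : Prop :=
  (∀ e ∈ T, Diag S e) ∧ (∀ e ∈ T, ∀ f ∈ T, ¬ DiagonalsCross e f) ∧ T.card = S.card - 3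

def triR (S : Finset ℕ) (R : Finset (ℕ × ℕ) → Prop) : Finset (Finset (ℕ × ℕ)) :=
  (S ×ˢ S).powerset.filter (fun T => IsTri S T ∧ R T)

def triQ (S : Finset ℕ) (Q : ℕ × ℕ → Prop) : Finset (Finset (ℕ × ℕ)) :=
  triR S (fun T => ∀ e ∈ T, Q e)

lemma mem_triR {S R T} : T ∈ triR S R ↔ IsTri S T ∧ R T := by
  simp only [triR, mem_filter, mem_powerset, and_iff_right_iff_imp]
  rintro ⟨⟨hd, -, -⟩, -⟩ e he
  exact mem_product.2 ⟨(hd e he).1, (hd e he).2.1⟩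

lemma mem_triQ {S Q T} : T ∈ triQ S Q ↔ IsTri S T ∧ ∀ e ∈ T, Q e := mem_triR

def Sin (S : Finset ℕ) (x y : ℕ) : Finset ℕ := S.filter (fun c => x ≤ c ∧ c ≤ y)
def Sout (S : Finset ℕ) (x y : ℕ) : Finset ℕ := S.filter (fun c => c ≤ x ∨ y ≤ c)
def Tin (T : Finset (ℕ × ℕ)) (x y : ℕ) : Finset (ℕ × ℕ) :=
  (T.filter (fun f => x ≤ f.1 ∧ f.2 ≤ y)).erase (x, y)
def Tout (T : Finset (ℕ × ℕ)) (x y : ℕ) : Finset (ℕ × ℕ) :=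
  T.filter (fun f => ¬(x ≤ f.1 ∧ f.2 ≤ y))

lemma classify {e f : ℕ × ℕ} (hf : f.1 < f.2) (h : ¬ DiagonalsCross e f) :
    (e.1 ≤ f.1 ∧ f.2 ≤ e.2) ∨ (f.2 ≤ e.1 ∨ e.2 ≤ f.1 ∨ (f.1 ≤ e.1 ∧ e.2 ≤ f.2)) := by
  unfold DiagonalsCross at h; omega

section Parts

variable {S : Finset ℕ} {T : Finset (ℕ × ℕ)} {x y : ℕ}

lemma sin_card_add_sout_card (hx : x ∈ S) (hy : y ∈ S) (hlt : x < y) :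
    (Sin S x y).card + (Sout S x y).card = S.card + 2 := by
  have hu : Sin S x y ∪ Sout S x y = S := by
    ext c; simp only [Sin, Sout, mem_union, mem_filter]
    constructor
    · rintro (⟨h, -⟩ | ⟨h, -⟩) <;> exact h
    · intro h; by_cases hc : x ≤ c ∧ c ≤ y
      · exact Or.inl ⟨h, hc⟩
      · exact Or.inr ⟨h, by omega⟩
  have hi : Sin S x y ∩ Sout S x y = {x, y} := by
    ext c; simp only [Sin, Sout, mem_inter, mem_filter, mem_insert, mem_singleton]
    constructor
    · rintro ⟨⟨-, h1⟩, ⟨-, h2⟩⟩; omega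
    · rintro (rfl | rfl)
      · exact ⟨⟨hx, le_refl _, le_of_lt hlt⟩, ⟨hx, Or.inl (le_refl _)⟩⟩
      · exact ⟨⟨hy, le_of_lt hlt, le_refl _⟩, ⟨hy, Or.inr (le_refl _)⟩⟩
  have h2 : ({x, y} : Finset ℕ).card = 2 := card_pair (by omega)
  have := card_union_add_card_inter (Sin S x y) (Sout S x y)
  rw [hu, hi, h2] at this; omega

lemma sin_card_ge (hxy : Diag S (x, y)) : 3 ≤ (Sin S x y).card := by
  obtain ⟨hx, hy, ⟨c, hc, h1, h2⟩, -⟩ := hxy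
  have : ({x, c, y} : Finset ℕ) ⊆ Sin S x y := by
    intro d hd
    simp only [mem_insert, mem_singleton] at hd
    simp only [Sin, mem_filter]
    rcases hd with rfl | rfl | rfl
    · exact ⟨hx, le_refl _, by omega⟩
    · exact ⟨hc, by omega, by omega⟩
    · exact ⟨hy, by omega, le_refl _⟩
  have h3 : ({x, c, y} : Finset ℕ).card = 3 := by
    rw [card_insert_of_notMem (by simp; omega), card_pair (by omega)]
  exact h3 ▸ card_le_card this

lemma sout_card_ge (hxy : Diag S (x, y)) : 3 ≤ (Sout S x y).card := by
  have hlt : x < y := hxy.lt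
  obtain ⟨hx, hy, -, hb⟩ := hxy
  have : ∃ v ∈ S, v < x ∨ y < v := by
    rcases hb with ⟨v, hv, h⟩ | ⟨v, hv, h⟩
    · exact ⟨v, hv, Or.inl h⟩
    · exact ⟨v, hv, Or.inr h⟩
  obtain ⟨v, hv, hvo⟩ := this
  have hsub : ({v, x, y} : Finset ℕ) ⊆ Sout S x y := by
    intro d hd
    simp only [mem_insert, mem_singleton] at hd
    simp only [Sout, mem_filter]
    rcases hd with rfl | rfl | rfl
    · exact ⟨hv, by omega⟩
    · exact ⟨hx, Or.inl (le_refl _)⟩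
    · exact ⟨hy, Or.inr (le_refl _)⟩
  have h3 : ({v, x, y} : Finset ℕ).card = 3 := by
    rw [card_insert_of_notMem (by simp; omega), card_pair (by omega)]
  exact h3 ▸ card_le_card hsub

lemma sin_card_lt (hxy : Diag S (x, y)) : (Sin S x y).card < S.card := by
  have hlt : x < y := hxy.lt
  obtain ⟨hx, hy, -, hb⟩ := hxy
  have : ∃ v ∈ S, v < x ∨ y < v := by
    rcases hb with ⟨v, hv, h⟩ | ⟨v, hv, h⟩
    · exact ⟨v, hv, Or.inl h⟩
    · exact ⟨v, hv, Or.inr h⟩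
  obtain ⟨v, hv, hvo⟩ := this
  refine card_lt_card ⟨filter_subset _ _, fun hsub => ?_⟩
  have := hsub hv
  simp only [Sin, mem_filter] at this
  omega

lemma sout_card_lt (hxy : Diag S (x, y)) : (Sout S x y).card < S.card := by
  obtain ⟨hx, hy, ⟨c, hc, h1, h2⟩, -⟩ := hxy
  refine card_lt_card ⟨filter_subset _ _, fun hsub => ?_⟩
  have := hsub hc
  simp only [Sout, mem_filter] at this
  simp only at h1 h2
  omega

lemma tin_subset : Tin T x y ⊆ T := (erase_subset _ _).trans (filter_subset _ _)
lemma tout_subset : Tout T x y ⊆ T := filter_subset _ _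

lemma nc_subset {T' : Finset (ℕ × ℕ)} (hsub : T' ⊆ T)
    (hnc : ∀ e ∈ T, ∀ f ∈ T, ¬ DiagonalsCross e f) :
    ∀ e ∈ T', ∀ f ∈ T', ¬ DiagonalsCross e f :=
  fun e he f hf => hnc e (hsub he) f (hsub hf)

lemma tin_diag (hd : ∀ e ∈ T, Diag S e)
    (hmem : (x, y) ∈ T) : ∀ f ∈ Tin T x y, Diag (Sin S x y) f := by
  intro f hf
  have hfT : f ∈ T := tin_subset hf
  simp only [Tin, mem_erase, mem_filter] at hf
  obtain ⟨hne, -, hf1, hf2⟩ := hf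
  obtain ⟨h1, h2, ⟨c, hc, hc1, hc2⟩, -⟩ := hd f hfT
  have hflt : f.1 < f.2 := by omega
  have hxyd := hd _ hmem
  have hx : x ∈ S := hxyd.1
  have hy : y ∈ S := hxyd.2.1
  have hxy : x < y := hxyd.lt
  refine ⟨?_, ?_, ⟨c, ?_, hc1, hc2⟩, ?_⟩
  · simp only [Sin, mem_filter]; exact ⟨h1, hf1, by omega⟩
  · simp only [Sin, mem_filter]; exact ⟨h2, by omega, hf2⟩
  · simp only [Sin, mem_filter]; exact ⟨hc, by omega, by omega⟩
  · rcases Nat.lt_or_ge x f.1 with h | h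
    · exact Or.inl ⟨x, by simp only [Sin, mem_filter]; exact ⟨hx, le_refl _, by omega⟩, h⟩
    · rcases Nat.lt_or_ge f.2 y with h' | h'
      · exact Or.inr ⟨y, by simp only [Sin, mem_filter]; exact ⟨hy, by omega, le_refl _⟩, h'⟩
      · exfalso; apply hne
        have : f.1 = x := by omega
        have : f.2 = y := by omega
        ext <;> simp_all

lemma tout_diag (hd : ∀ e ∈ T, Diag S e)
    (hnc : ∀ e ∈ T, ∀ f ∈ T, ¬ DiagonalsCross e f)
    (hmem : (x, y) ∈ T) : ∀ f ∈ Tout T x y, Diag (Sout S x y) f := by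
  intro f hf
  have hfT : f ∈ T := tout_subset hf
  simp only [Tout, mem_filter] at hf
  obtain ⟨-, hnotin⟩ := hf
  obtain ⟨h1, h2, ⟨c, hc, hc1, hc2⟩, hb⟩ := hd f hfT
  have hflt : f.1 < f.2 := by omega
  have hxyd := hd _ hmem
  have hx : x ∈ S := hxyd.1
  have hy : y ∈ S := hxyd.2.1
  have hxy : x < y := hxyd.lt
  have hcl := classify (e := (x,y)) (f := f) hflt (hnc _ hmem _ hfT)
  simp only at hcl
  have hout : f.2 ≤ x ∨ y ≤ f.1 ∨ (f.1 ≤ x ∧ y ≤ f.2) := by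
    rcases hcl with h | h
    · exfalso; exact hnotin ⟨h.1, h.2⟩
    · exact h
  have hfne : ¬(f.1 = x ∧ f.2 = y) := by
    rintro ⟨e1, e2⟩; exact hnotin ⟨le_of_eq e1.symm, le_of_eq e2⟩
  refine ⟨?_, ?_, ?_, ?_⟩
  · simp only [Sout, mem_filter]; exact ⟨h1, by omega⟩
  · simp only [Sout, mem_filter]; exact ⟨h2, by omega⟩
  · -- middle witness in Sout
    rcases hout with h | h | h
    · exact ⟨c, by simp only [Sout, mem_filter]; exact ⟨hc, by omega⟩, hc1, hc2⟩
    · exact ⟨c, by simp only [Sout, mem_filter]; exact ⟨hc, by omega⟩, hc1, hc2⟩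
    · by_cases hcin : c ≤ x ∨ y ≤ c
      · exact ⟨c, by simp only [Sout, mem_filter]; exact ⟨hc, hcin⟩, hc1, hc2⟩
      · rcases Nat.lt_or_ge f.1 x with h' | h'
        · exact ⟨x, by simp only [Sout, mem_filter]; exact ⟨hx, Or.inl (le_refl _)⟩, h', by omega⟩
        · have hf1x : f.1 = x := by omega
          have hf2y : y < f.2 := by
            rcases Nat.lt_or_ge y f.2 with hh | hh
            · exact hh
            · exfalso; exact hfne ⟨hf1x, by omega⟩
          exact ⟨y, by simp only [Sout, mem_filter]; exact ⟨hy, Or.inr (le_refl _)⟩, by omega, hf2y⟩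
  · -- base witness in Sout
    rcases hout with h | h | h
    · exact Or.inr ⟨y, by simp only [Sout, mem_filter]; exact ⟨hy, Or.inr (le_refl _)⟩, by omega⟩
    · exact Or.inl ⟨x, by simp only [Sout, mem_filter]; exact ⟨hx, Or.inl (le_refl _)⟩, by omega⟩
    · rcases hb with ⟨v, hv, hvlt⟩ | ⟨v, hv, hvlt⟩
      · exact Or.inl ⟨v, by simp only [Sout, mem_filter]; exact ⟨hv, by omega⟩, hvlt⟩
      · exact Or.inr ⟨v, by simp only [Sout, mem_filter]; exact ⟨hv, by omega⟩, hvlt⟩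

lemma t_card_split (hmem : (x, y) ∈ T) :
    T.card = (Tin T x y).card + (Tout T x y).card + 1 := by
  have h1 : (T.filter (fun f => x ≤ f.1 ∧ f.2 ≤ y)).card
      + (T.filter (fun f => ¬(x ≤ f.1 ∧ f.2 ≤ y))).card = T.card :=
    card_filter_add_card_filter_not _
  have h2 : (x, y) ∈ T.filter (fun f => x ≤ f.1 ∧ f.2 ≤ y) := by
    simp only [mem_filter]; exact ⟨hmem, le_refl _, le_refl _⟩
  have h3 := card_erase_add_one h2
  simp only [Tin, Tout]
  omega

end Parts

/-- Any noncrossing family of chords of `S` has at most `|S| - 3` elements. -/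
lemma card_le_of_noncrossing : ∀ (N : ℕ) (S : Finset ℕ) (T : Finset (ℕ × ℕ)),
    S.card ≤ N → (∀ e ∈ T, Diag S e) →
    (∀ e ∈ T, ∀ f ∈ T, ¬ DiagonalsCross e f) → T.card ≤ S.card - 3 := by
  intro N
  induction N with
  | zero =>
    intro S T hN hd hnc
    rcases T.eq_empty_or_nonempty with rfl | ⟨e, he⟩
    · simp
    · obtain ⟨h1, -, -, -⟩ := hd e he
      have : S.Nonempty := ⟨e.1, h1⟩
      have := card_pos.2 this
      omega
  | succ N ih =>
    intro S T hN hd hnc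
    rcases T.eq_empty_or_nonempty with rfl | ⟨e, he⟩
    · simp
    · obtain ⟨x, y⟩ := e
      have hdxy : Diag S (x, y) := hd _ he
      have hslt : (Sin S x y).card < S.card := sin_card_lt hdxy
      have hslt2 : (Sout S x y).card < S.card := sout_card_lt hdxy
      have hin : (Tin T x y).card ≤ (Sin S x y).card - 3 := ih (Sin S x y) (Tin T x y)
        (by omega) (tin_diag hd he) (nc_subset tin_subset hnc)
      have hout : (Tout T x y).card ≤ (Sout S x y).card - 3 := ih (Sout S x y) (Tout T x y)
        (by omega) (tout_diag hd hnc he) (nc_subset tout_subset hnc)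
      have hcards : (Sin S x y).card + (Sout S x y).card = S.card + 2 :=
        sin_card_add_sout_card hdxy.1 hdxy.2.1 hdxy.lt
      have h3in : 3 ≤ (Sin S x y).card := sin_card_ge hdxy
      have h3out : 3 ≤ (Sout S x y).card := sout_card_ge hdxy
      have hsplit : T.card = (Tin T x y).card + (Tout T x y).card + 1 := t_card_split he
      omega


/-- Splitting a triangulation along one of its chords yields triangulations of
the two parts. -/
lemma isTri_parts {S : Finset ℕ} {T : Finset (ℕ × ℕ)} {x y : ℕ}
    (hT : IsTri S T) (hmem : (x, y) ∈ T) :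
    IsTri (Sin S x y) (Tin T x y) ∧ IsTri (Sout S x y) (Tout T x y) := by
  obtain ⟨hd, hnc, hcard⟩ := hT
  have hdxy : Diag S (x, y) := hd _ hmem
  have hin : (Tin T x y).card ≤ (Sin S x y).card - 3 :=
    card_le_of_noncrossing _ _ _ (le_refl _) (tin_diag hd hmem) (nc_subset tin_subset hnc)
  have hout : (Tout T x y).card ≤ (Sout S x y).card - 3 :=
    card_le_of_noncrossing _ _ _ (le_refl _) (tout_diag hd hnc hmem) (nc_subset tout_subset hnc)
  have hcards : (Sin S x y).card + (Sout S x y).card = S.card + 2 :=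
    sin_card_add_sout_card hdxy.1 hdxy.2.1 hdxy.lt
  have h3in : 3 ≤ (Sin S x y).card := sin_card_ge hdxy
  have h3out : 3 ≤ (Sout S x y).card := sout_card_ge hdxy
  have hsplit : T.card = (Tin T x y).card + (Tout T x y).card + 1 := t_card_split hmem
  refine ⟨⟨tin_diag hd hmem, nc_subset tin_subset hnc, by omega⟩,
    ⟨tout_diag hd hnc hmem, nc_subset tout_subset hnc, by omega⟩⟩

/-- Every triangulation of `S` (with `|S| ≥ 3`) has a triangle at the base:
there is `k` strictly between the min `a` and max `b` such that each of `(a,k)`,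
`(k,b)` is either in `T` or joins consecutive elements of `S`. -/
lemma apex_exists {S : Finset ℕ} {T : Finset (ℕ × ℕ)} {a b : ℕ}
    (hS : 3 ≤ S.card) (ha : a ∈ S) (hb : b ∈ S)
    (hmin : ∀ c ∈ S, a ≤ c) (hmax : ∀ c ∈ S, c ≤ b) (hT : IsTri S T) :
    ∃ k ∈ S, a < k ∧ k < b ∧
      ((a, k) ∈ T ∨ ∀ c ∈ S, ¬(a < c ∧ c < k)) ∧
      ((k, b) ∈ T ∨ ∀ c ∈ S, ¬(k < c ∧ c < b)) := by
  obtain ⟨hd, hnc, hcard⟩ := hT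
  -- a middle element exists
  have hmid : ∃ c ∈ S, a < c ∧ c < b := by
    by_contra h
    push_neg at h
    have hsub : S ⊆ {a, b} := by
      intro c hc
      have h1 := hmin c hc
      have h2 := hmax c hc
      have h3 := h c hc
      simp only [mem_insert, mem_singleton]
      omega
    have := card_le_card hsub
    have : ({a, b} : Finset ℕ).card ≤ 2 := card_insert_le _ _ |>.trans (by simp)
    omega
  obtain ⟨c0, hc0, hc0a, hc0b⟩ := hmid
  set K := S.filter (fun k => a < k ∧ k < b ∧ ((a, k) ∈ T ∨ ∀ c ∈ S, ¬(a < c ∧ c < k))) with hK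
  have hKne : K.Nonempty := by
    have hFne : (S.filter (fun c => a < c)).Nonempty := ⟨c0, by simp [mem_filter, hc0, hc0a]⟩
    set s := (S.filter (fun c => a < c)).min' hFne with hs
    have hsmem : s ∈ S.filter (fun c => a < c) := min'_mem _ _
    simp only [mem_filter] at hsmem
    refine ⟨s, ?_⟩
    simp only [hK, mem_filter]
    refine ⟨hsmem.1, hsmem.2, ?_, Or.inr ?_⟩
    · have := (S.filter (fun c => a < c)).min'_le c0 (mem_filter.mpr ⟨hc0, hc0a⟩)
      omega
    · intro c hc hcon
      have := (S.filter (fun c => a < c)).min'_le c (mem_filter.mpr ⟨hc, hcon.1⟩)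
      omega
  set k := K.max' hKne with hk
  have hkmem : k ∈ K := max'_mem _ _
  simp only [hK, mem_filter] at hkmem
  obtain ⟨hkS, hak, hkb, hleft⟩ := hkmem
  refine ⟨k, hkS, hak, hkb, hleft, ?_⟩
  by_contra h
  push_neg at h
  obtain ⟨hkbT, d, hdS, hdk, hdb⟩ := h
  -- insert (k,b) and contradict the cardinality bound
  have hdiag : Diag S (k, b) := ⟨hkS, hb, ⟨d, hdS, hdk, hdb⟩, Or.inl ⟨a, ha, hak⟩⟩
  have hnc' : ∀ f ∈ T, ¬ DiagonalsCross (k, b) f := by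
    intro f hf hcross
    have hdf := hd f hf
    have hf2 : f.2 ≤ b := hmax _ hdf.2.1
    have hf1a : a ≤ f.1 := hmin _ hdf.1
    rcases hcross with ⟨h1, h2, h3⟩ | ⟨h1, h2, h3⟩
    · simp only at h1 h2 h3; omega
    · simp only at h1 h2 h3
      -- f.1 < k < f.2 < b ; show f.1 = a and contradict maximality
      have hf1 : f.1 = a := by
        rcases hleft with hakT | hnomid
        · by_contra hne
          have : a < f.1 := by omega
          exact hnc _ hakT f hf (Or.inl (by simp only; omega))
        · by_contra hne
          exact hnomid f.1 hdf.1 (by omega)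
      have hfK : f.2 ∈ K := by
        simp only [hK, mem_filter]
        refine ⟨hdf.2.1, by omega, by omega, Or.inl ?_⟩
        have : f = (f.1, f.2) := rfl
        rw [hf1] at this
        exact this ▸ hf
      have := le_max' _ _ hfK
      omega
  have hnotmem : (k, b) ∉ T := hkbT
  have hbound := card_le_of_noncrossing S.card S (insert (k, b) T) (le_refl _)
    (by intro e he
        rcases mem_insert.1 he with rfl | he'
        · exact hdiag
        · exact hd e he')
    (by intro e he f hf
        rcases mem_insert.1 he with rfl | he' <;> rcases mem_insert.1 hf with rfl | hf'
        · rintro (⟨h1, -⟩ | ⟨h1, -⟩) <;> omega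
        · exact hnc' f hf'
        · intro hcross
          apply hnc' e he'
          rcases hcross with ⟨h1, h2, h3⟩ | ⟨h1, h2, h3⟩
          · exact Or.inr ⟨h1, h2, h3⟩
          · exact Or.inl ⟨h1, h2, h3⟩
        · exact hnc e he' f hf')
  rw [card_insert_of_notMem hnotmem] at hbound
  omega


lemma diag_of_filter {S : Finset ℕ} {p : ℕ → Prop} [DecidablePred p] {f : ℕ × ℕ}
    (h : Diag (S.filter p) f) : Diag S f := by
  obtain ⟨h1, h2, ⟨c, hc, hc1, hc2⟩, hb⟩ := h
  refine ⟨(mem_filter.1 h1).1, (mem_filter.1 h2).1, ⟨c, (mem_filter.1 hc).1, hc1, hc2⟩, ?_⟩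
  rcases hb with ⟨v, hv, hvp⟩ | ⟨v, hv, hvp⟩
  · exact Or.inl ⟨v, (mem_filter.1 hv).1, hvp⟩
  · exact Or.inr ⟨v, (mem_filter.1 hv).1, hvp⟩

lemma diag_of_sin {S : Finset ℕ} {x y : ℕ} {f : ℕ × ℕ}
    (h : Diag (Sin S x y) f) : Diag S f := by
  unfold Sin at h; exact diag_of_filter h

lemma diag_of_sout {S : Finset ℕ} {x y : ℕ} {f : ℕ × ℕ}
    (h : Diag (Sout S x y) f) : Diag S f := by
  unfold Sout at h; exact diag_of_filter h

lemma t1_props {S : Finset ℕ} {x y : ℕ} {T1 : Finset (ℕ × ℕ)}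
    (hT1 : ∀ f ∈ T1, Diag (Sin S x y) f) :
    ∀ f ∈ T1, x ≤ f.1 ∧ f.1 < f.2 ∧ f.2 ≤ y ∧ (x < f.1 ∨ f.2 < y) := by
  intro f hf
  obtain ⟨h1, h2, -, hb⟩ := hT1 f hf
  have hlt : f.1 < f.2 := (hT1 f hf).lt
  simp only [Sin, mem_filter] at h1 h2
  refine ⟨h1.2.1, hlt, h2.2.2, ?_⟩
  rcases hb with ⟨v, hv, hvp⟩ | ⟨v, hv, hvp⟩ <;> simp only [Sin, mem_filter] at hv <;> omega

lemma t2_props {S : Finset ℕ} {x y : ℕ} {T2 : Finset (ℕ × ℕ)}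
    (hT2 : ∀ f ∈ T2, Diag (Sout S x y) f) :
    ∀ f ∈ T2, f.1 < f.2 ∧ (f.1 ≤ x ∨ y ≤ f.1) ∧ (f.2 ≤ x ∨ y ≤ f.2) ∧
      ¬(x ≤ f.1 ∧ f.2 ≤ y) := by
  intro f hf
  obtain ⟨h1, h2, ⟨c, hc, hc1, hc2⟩, -⟩ := hT2 f hf
  have hlt : f.1 < f.2 := (hT2 f hf).lt
  simp only [Sout, mem_filter] at h1 h2 hc
  refine ⟨hlt, h1.2, h2.2, ?_⟩
  rintro ⟨ha, hb⟩
  omega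

lemma xy_not_mem_t1 {S : Finset ℕ} {x y : ℕ} {T1 : Finset (ℕ × ℕ)}
    (hT1 : ∀ f ∈ T1, Diag (Sin S x y) f) : (x, y) ∉ T1 := by
  intro hmem
  have := t1_props hT1 _ hmem
  simp only at this
  omega

lemma xy_not_mem_t2 {S : Finset ℕ} {x y : ℕ} {T2 : Finset (ℕ × ℕ)}
    (hxy : x < y) (hT2 : ∀ f ∈ T2, Diag (Sout S x y) f) : (x, y) ∉ T2 := by
  intro hmem
  have := t2_props hT2 _ hmem
  simp only at this
  omega

/-- Recombining triangulations of the two sides of a chord. -/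
lemma recombine {S : Finset ℕ} {x y : ℕ} {T1 T2 : Finset (ℕ × ℕ)}
    (hxy : Diag S (x, y)) (hT1 : IsTri (Sin S x y) T1) (hT2 : IsTri (Sout S x y) T2) :
    IsTri S (insert (x, y) (T1 ∪ T2)) ∧
    Tin (insert (x, y) (T1 ∪ T2)) x y = T1 ∧
    Tout (insert (x, y) (T1 ∪ T2)) x y = T2 := by
  have hxylt : x < y := hxy.lt
  have p1 := t1_props hT1.1
  have p2 := t2_props hT2.1
  have hn1 := xy_not_mem_t1 hT1.1
  have hn2 := xy_not_mem_t2 hxylt hT2.1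
  have hdisj : Disjoint T1 T2 := by
    rw [disjoint_left]
    intro f hf1 hf2
    have a1 := p1 f hf1
    have a2 := p2 f hf2
    exact a2.2.2.2 ⟨a1.1, a1.2.2.1⟩
  set T := insert (x, y) (T1 ∪ T2) with hTdef
  have hcard : T.card = T1.card + T2.card + 1 := by
    rw [hTdef, card_insert_of_notMem (by simp [hn1, hn2]), card_union_of_disjoint hdisj]
  have hdT : ∀ e ∈ T, Diag S e := by
    intro e he
    rcases mem_insert.1 he with rfl | he'
    · exact hxy
    · rcases mem_union.1 he' with h | h
      · exact diag_of_sin (hT1.1 e h)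
      · exact diag_of_sout (hT2.1 e h)
  have hncT : ∀ e ∈ T, ∀ f ∈ T, ¬ DiagonalsCross e f := by
    have key12 : ∀ e ∈ T1, ∀ f ∈ T2, ¬ DiagonalsCross e f := by
      intro e he f hf
      have a1 := p1 e he
      have a2 := p2 f hf
      unfold DiagonalsCross
      omega
    have keyx1 : ∀ f ∈ T1, ¬ DiagonalsCross (x, y) f ∧ ¬ DiagonalsCross f (x, y) := by
      intro f hf
      have a1 := p1 f hf
      unfold DiagonalsCross
      constructor <;> omega
    have keyx2 : ∀ f ∈ T2, ¬ DiagonalsCross (x, y) f ∧ ¬ DiagonalsCross f (x, y) := by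
      intro f hf
      have a2 := p2 f hf
      unfold DiagonalsCross
      constructor <;> omega
    have symm : ∀ e f : ℕ × ℕ, DiagonalsCross e f → DiagonalsCross f e := by
      intro e f h
      rcases h with h | h
      · exact Or.inr h
      · exact Or.inl h
    intro e he f hf
    rcases mem_insert.1 he with rfl | he' <;> rcases mem_insert.1 hf with rfl | hf'
    · unfold DiagonalsCross; omega
    · rcases mem_union.1 hf' with h | h
      · exact (keyx1 f h).1
      · exact (keyx2 f h).1
    · rcases mem_union.1 he' with h | h
      · exact (keyx1 e h).2
      · exact (keyx2 e h).2
    · rcases mem_union.1 he' with h | h <;> rcases mem_union.1 hf' with h' | h'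
      · exact hT1.2.1 e h f h'
      · exact key12 e h f h'
      · exact fun hc => key12 f h' e h (symm e f hc)
      · exact hT2.2.1 e h f h'
  have hTin : Tin T x y = T1 := by
    ext f
    simp only [Tin, mem_erase, mem_filter, hTdef, mem_insert, mem_union]
    constructor
    · rintro ⟨hne, rfl | hf | hf, hin⟩
      · exact absurd rfl hne
      · exact hf
      · exact absurd ⟨hin.1, hin.2⟩ (p2 f hf).2.2.2
    · intro hf
      have a1 := p1 f hf
      refine ⟨?_, Or.inr (Or.inl hf), a1.1, a1.2.2.1⟩
      rintro rfl
      exact hn1 hf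
  have hTout : Tout T x y = T2 := by
    ext f
    simp only [Tout, mem_filter, hTdef, mem_insert, mem_union]
    constructor
    · rintro ⟨rfl | hf | hf, hout⟩
      · exact absurd ⟨le_refl _, le_refl _⟩ hout
      · exact absurd ⟨(p1 f hf).1, (p1 f hf).2.2.1⟩ hout
      · exact hf
    · intro hf
      exact ⟨Or.inr (Or.inr hf), (p2 f hf).2.2.2⟩
  have hSin3 : 3 ≤ (Sin S x y).card := sin_card_ge hxy
  have hSout3 : 3 ≤ (Sout S x y).card := sout_card_ge hxy
  have hsum : (Sin S x y).card + (Sout S x y).card = S.card + 2 :=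
    sin_card_add_sout_card hxy.1 hxy.2.1 hxylt
  have hc1 := hT1.2.2
  have hc2 := hT2.2.2
  exact ⟨⟨hdT, hncT, by omega⟩, hTin, hTout⟩

/-- The central splitting bijection, in cardinality form. -/
lemma split_card (S : Finset ℕ) (x y : ℕ) (hxy : Diag S (x, y))
    (P1 : ℕ × ℕ → Prop) (R : Finset (ℕ × ℕ) → Prop) :
    (triR S (fun T => (x, y) ∈ T ∧ (∀ e ∈ Tin T x y, P1 e) ∧ R (Tout T x y))).card
      = (triQ (Sin S x y) P1).card * (triR (Sout S x y) R).card := by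
  rw [← card_product]
  refine card_bij' (fun T _ => (Tin T x y, Tout T x y))
    (fun p _ => insert (x, y) (p.1 ∪ p.2)) ?_ ?_ ?_ ?_
  · intro T hT
    rw [mem_triR] at hT
    obtain ⟨hTri, hmem, hP1, hR⟩ := hT
    obtain ⟨hin, hout⟩ := isTri_parts hTri hmem
    rw [mem_product]
    exact ⟨mem_triQ.2 ⟨hin, hP1⟩, mem_triR.2 ⟨hout, hR⟩⟩
  · intro p hp
    rw [mem_product] at hp
    obtain ⟨hp1, hp2⟩ := hp
    rw [mem_triQ] at hp1
    rw [mem_triR] at hp2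
    obtain ⟨hrec, hTin, hTout⟩ := recombine hxy hp1.1 hp2.1
    rw [mem_triR]
    refine ⟨hrec, mem_insert_self _ _, ?_, ?_⟩
    · rw [hTin]; exact hp1.2
    · rw [hTout]; exact hp2.2
  · intro T hT
    rw [mem_triR] at hT
    obtain ⟨hTri, hmem, -, -⟩ := hT
    ext f
    simp only [mem_insert, mem_union, Tin, Tout, mem_erase, mem_filter]
    constructor
    · rintro (rfl | ⟨-, hf, -⟩ | ⟨hf, -⟩) <;> first | exact hmem | exact hf
    · intro hf
      by_cases h1 : f = (x, y)
      · exact Or.inl h1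
      · by_cases h2 : x ≤ f.1 ∧ f.2 ≤ y
        · exact Or.inr (Or.inl ⟨h1, hf, h2⟩)
        · exact Or.inr (Or.inr ⟨hf, h2⟩)
  · intro p hp
    rw [mem_product] at hp
    obtain ⟨hp1, hp2⟩ := hp
    rw [mem_triQ] at hp1
    rw [mem_triR] at hp2
    obtain ⟨-, hTin, hTout⟩ := recombine hxy hp1.1 hp2.1
    exact Prod.ext hTin hTout


lemma triR_singleton {S : Finset ℕ} {R : Finset (ℕ × ℕ) → Prop}
    (hS : S.card ≤ 3) (hR : R ∅) : triR S R = {∅} := by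
  ext T
  simp only [mem_triR, mem_singleton]
  constructor
  · rintro ⟨⟨-, -, hc⟩, -⟩
    exact card_eq_zero.1 (by omega)
  · rintro rfl
    exact ⟨⟨by simp, by simp, by simp; omega⟩, hR⟩

lemma triR_congr {S : Finset ℕ} {R1 R2 : Finset (ℕ × ℕ) → Prop}
    (h : ∀ T, IsTri S T → (R1 T ↔ R2 T)) : triR S R1 = triR S R2 := by
  unfold triR
  apply filter_congr
  intro T _
  exact and_congr_right (h T)

lemma cross_symm {e f : ℕ × ℕ} (h : DiagonalsCross e f) : DiagonalsCross f e := by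
  rcases h with h | h
  · exact Or.inr h
  · exact Or.inl h

/-- Splitting along a single chord, with an arbitrary condition outside. -/
lemma split_card2 (S : Finset ℕ) (x y : ℕ) (hxy : Diag S (x, y))
    (R : Finset (ℕ × ℕ) → Prop) :
    (triR S (fun T => (x, y) ∈ T ∧ R (Tout T x y))).card
      = (triQ (Sin S x y) (fun _ => True)).card * (triR (Sout S x y) R).card := by
  have hs : (triR S (fun T => (x, y) ∈ T ∧ ((∀ e ∈ Tin T x y, True) ∧ R (Tout T x y)))).card
      = (triQ (Sin S x y) (fun _ => True)).card * (triR (Sout S x y) R).card :=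
    split_card S x y hxy (fun _ => True) R
  refine Eq.trans ?_ hs
  congr 1
  apply triR_congr
  intro T _
  constructor
  · rintro ⟨h1, h2⟩; exact ⟨h1, fun _ _ => trivial, h2⟩
  · rintro ⟨h1, -, h2⟩; exact ⟨h1, h2⟩

/-- Splitting along a single chord, no other conditions. -/
lemma split_card1 (S : Finset ℕ) (x y : ℕ) (hxy : Diag S (x, y)) :
    (triR S (fun T => (x, y) ∈ T)).card
      = (triQ (Sin S x y) (fun _ => True)).card
        * (triR (Sout S x y) (fun _ => True)).card := by
  have hs := split_card2 S x y hxy (fun _ => True)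
  refine Eq.trans ?_ hs
  congr 1
  apply triR_congr
  intro T _
  constructor
  · intro h; exact ⟨h, trivial⟩
  · rintro ⟨h, -⟩; exact h

/-- The apex recursion for unrestricted triangulation counts. -/
lemma recur_free {S : Finset ℕ} {a b : ℕ} (hS : 3 ≤ S.card) (ha : a ∈ S) (hb : b ∈ S)
    (hmin : ∀ c ∈ S, a ≤ c) (hmax : ∀ c ∈ S, c ≤ b) :
    (triQ S (fun _ => True)).card =
      ∑ k ∈ S.filter (fun c => a < c ∧ c < b),
        (triQ (Sin S a k) (fun _ => True)).card *
          (triQ (Sin S k b) (fun _ => True)).card := by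
  classical
  set mid := S.filter (fun c => a < c ∧ c < b) with hmid
  set Ak : ℕ → Finset (Finset (ℕ × ℕ)) := fun k =>
    triR S (fun T => ((a, k) ∈ T ∨ ∀ c ∈ S, ¬(a < c ∧ c < k)) ∧
      ((k, b) ∈ T ∨ ∀ c ∈ S, ¬(k < c ∧ c < b))) with hAk
  have hcover : triQ S (fun _ => True) = mid.biUnion Ak := by
    ext T
    simp only [mem_biUnion, mem_triQ]
    constructor
    · rintro ⟨hTri, -⟩
      obtain ⟨k, hkS, hak, hkb, h1, h2⟩ := apex_exists hS ha hb hmin hmax hTri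
      exact ⟨k, by simp only [hmid, mem_filter]; exact ⟨hkS, hak, hkb⟩,
        mem_triR.2 ⟨hTri, h1, h2⟩⟩
    · rintro ⟨k, -, hk⟩
      exact ⟨(mem_triR.1 hk).1, fun _ _ => trivial⟩
  have hdisj : ∀ k ∈ mid, ∀ k' ∈ mid, k ≠ k' → Disjoint (Ak k) (Ak k') := by
    have key : ∀ k ∈ mid, ∀ k' ∈ mid, k < k' → Disjoint (Ak k) (Ak k') := by
      intro k hk k' hk' hlt
      simp only [hmid, mem_filter] at hk hk'
      rw [disjoint_left]
      intro T hT hT'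
      rw [mem_triR] at hT hT'
      obtain ⟨hTri, -, h2⟩ := hT
      obtain ⟨-, h1', -⟩ := hT'
      have hkbT : (k, b) ∈ T := by
        rcases h2 with h | h
        · exact h
        · exact (h k' hk'.1 ⟨by omega, hk'.2.2⟩).elim
      have hak'T : (a, k') ∈ T := by
        rcases h1' with h | h
        · exact h
        · exact (h k hk.1 ⟨hk.2.1, hlt⟩).elim
      exact hTri.2.1 _ hak'T _ hkbT (Or.inl (by simp only; omega))
    intro k hk k' hk' hne
    rcases Nat.lt_or_ge k k' with h | h
    · exact key k hk k' hk' h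
    · exact (key k' hk' k hk (by omega)).symm
  have card3 : ∀ u v w : ℕ, ({u, v, w} : Finset ℕ).card ≤ 3 := by
    intro u v w
    apply (card_insert_le _ _).trans
    have := card_insert_le v ({w} : Finset ℕ)
    simp at this ⊢
    omega
  rw [hcover, card_biUnion hdisj]
  apply sum_congr rfl
  intro k hk
  simp only [hmid, mem_filter] at hk
  obtain ⟨hkS, hak, hkb⟩ := hk
  have sinak_small : (∀ c ∈ S, ¬(a < c ∧ c < k)) → triQ (Sin S a k) (fun _ => True) = {∅} := by
    intro hL
    apply triR_singleton _ (by simp)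
    have hsub : Sin S a k ⊆ {a, k} := by
      intro c hc
      simp only [Sin, mem_filter] at hc
      have := hL c hc.1
      simp only [mem_insert, mem_singleton]
      omega
    calc (Sin S a k).card ≤ ({a, k} : Finset ℕ).card := card_le_card hsub
      _ ≤ 3 := (card_insert_le _ _).trans (by simp)
  have sinkb_small : (∀ c ∈ S, ¬(k < c ∧ c < b)) → triQ (Sin S k b) (fun _ => True) = {∅} := by
    intro hR
    apply triR_singleton _ (by simp)
    have hsub : Sin S k b ⊆ {k, b} := by
      intro c hc
      simp only [Sin, mem_filter] at hc
      have := hR c hc.1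
      simp only [mem_insert, mem_singleton]
      omega
    calc (Sin S k b).card ≤ ({k, b} : Finset ℕ).card := card_le_card hsub
      _ ≤ 3 := (card_insert_le _ _).trans (by simp)
  by_cases hL : ∀ c ∈ S, ¬(a < c ∧ c < k) <;> by_cases hR : ∀ c ∈ S, ¬(k < c ∧ c < b)
  · -- both adjacent: S = {a,k,b}
    have hsub : S ⊆ {a, k, b} := by
      intro c hc
      have h1 := hmin c hc
      have h2 := hmax c hc
      have h3 := hL c hc
      have h4 := hR c hc
      simp only [mem_insert, mem_singleton]
      omega
    have hcard3 : S.card ≤ 3 := (card_le_card hsub).trans (card3 a k b)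
    have e1 : Ak k = {∅} := triR_singleton hcard3 ⟨Or.inr hL, Or.inr hR⟩
    rw [e1, sinak_small hL, sinkb_small hR]
    simp
  · -- (a,k) adjacent, (k,b) a real chord
    have hdiag : Diag S (k, b) := by
      refine ⟨hkS, hb, ?_, Or.inl ⟨a, ha, hak⟩⟩
      push_neg at hR
      obtain ⟨c, hc, h1, h2⟩ := hR
      exact ⟨c, hc, h1, h2⟩
    have e0 : Ak k = triR S (fun T => (k, b) ∈ T) := by
      apply triR_congr
      intro T hTri
      constructor
      · rintro ⟨-, h2⟩
        rcases h2 with h | h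
        · exact h
        · push_neg at hR; obtain ⟨c, hc, h1', h2'⟩ := hR
          exact (h c hc ⟨h1', h2'⟩).elim
      · intro h
        exact ⟨Or.inr hL, Or.inl h⟩
    have e3 : triR (Sout S k b) (fun (_ : Finset (ℕ × ℕ)) => True) = {∅} := by
      apply triR_singleton _ trivial
      have hsub : Sout S k b ⊆ {a, k, b} := by
        intro c hc
        simp only [Sout, mem_filter] at hc
        have h1 := hmin c hc.1
        have h2 := hmax c hc.1
        have h3 := hL c hc.1
        simp only [mem_insert, mem_singleton]
        omega
      exact (card_le_card hsub).trans (card3 a k b)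
    rw [e0, split_card1 S k b hdiag, e3, sinak_small hL]
    simp [mul_comm]
  · -- (a,k) real chord, (k,b) adjacent
    have hdiag : Diag S (a, k) := by
      refine ⟨ha, hkS, ?_, Or.inr ⟨b, hb, hkb⟩⟩
      push_neg at hL
      obtain ⟨c, hc, h1, h2⟩ := hL
      exact ⟨c, hc, h1, h2⟩
    have e0 : Ak k = triR S (fun T => (a, k) ∈ T) := by
      apply triR_congr
      intro T hTri
      constructor
      · rintro ⟨h1, -⟩
        rcases h1 with h | h
        · exact h
        · push_neg at hL; obtain ⟨c, hc, h1', h2'⟩ := hL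
          exact (h c hc ⟨h1', h2'⟩).elim
      · intro h
        exact ⟨Or.inl h, Or.inr hR⟩
    have e4 : triR (Sout S a k) (fun (_ : Finset (ℕ × ℕ)) => True) = {∅} := by
      apply triR_singleton _ trivial
      have hsub : Sout S a k ⊆ {a, k, b} := by
        intro c hc
        simp only [Sout, mem_filter] at hc
        have h1 := hmin c hc.1
        have h2 := hmax c hc.1
        have h3 := hR c hc.1
        simp only [mem_insert, mem_singleton]
        omega
      exact (card_le_card hsub).trans (card3 a k b)
    rw [e0, split_card1 S a k hdiag, e4, sinkb_small hR]
  · -- both real chords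
    have hdiagL : Diag S (a, k) := by
      refine ⟨ha, hkS, ?_, Or.inr ⟨b, hb, hkb⟩⟩
      push_neg at hL
      obtain ⟨c, hc, h1, h2⟩ := hL
      exact ⟨c, hc, h1, h2⟩
    have e0 : Ak k = triR S (fun T => (a, k) ∈ T ∧ (fun T2 => (k, b) ∈ T2) (Tout T a k)) := by
      apply triR_congr
      intro T hTri
      simp only [Tout, mem_filter]
      constructor
      · rintro ⟨h1, h2⟩
        have hakT : (a, k) ∈ T := by
          rcases h1 with h | h
          · exact h
          · push_neg at hL; obtain ⟨c, hc, h1', h2'⟩ := hL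
            exact (h c hc ⟨h1', h2'⟩).elim
        have hkbT : (k, b) ∈ T := by
          rcases h2 with h | h
          · exact h
          · push_neg at hR; obtain ⟨c, hc, h1', h2'⟩ := hR
            exact (h c hc ⟨h1', h2'⟩).elim
        refine ⟨hakT, hkbT, ?_⟩
        simp only [not_and, not_le]
        omega
      · rintro ⟨h1, h2, -⟩
        exact ⟨Or.inl h1, Or.inl h2⟩
    rw [e0, split_card2 S a k hdiagL (fun T2 => (k, b) ∈ T2)]
    congr 1
    -- second factor: split along (k,b) inside Sout S a k
    have hkS' : k ∈ Sout S a k := by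
      simp only [Sout, mem_filter]; exact ⟨hkS, Or.inr (le_refl _)⟩
    have hbS' : b ∈ Sout S a k := by
      simp only [Sout, mem_filter]; exact ⟨hb, Or.inr (le_of_lt hkb)⟩
    have haS' : a ∈ Sout S a k := by
      simp only [Sout, mem_filter]; exact ⟨ha, Or.inl (le_refl _)⟩
    have hdiagR : Diag (Sout S a k) (k, b) := by
      refine ⟨hkS', hbS', ?_, Or.inl ⟨a, haS', hak⟩⟩
      push_neg at hR
      obtain ⟨c, hc, h1, h2⟩ := hR
      exact ⟨c, by simp only [Sout, mem_filter]; exact ⟨hc, Or.inr (le_of_lt h1)⟩, h1, h2⟩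
    have e2 : Sin (Sout S a k) k b = Sin S k b := by
      ext c
      simp only [Sin, Sout, mem_filter]
      constructor
      · rintro ⟨⟨hc, -⟩, h⟩; exact ⟨hc, h⟩
      · rintro ⟨hc, h⟩; exact ⟨⟨hc, Or.inr h.1⟩, h⟩
    have e3 : triR (Sout (Sout S a k) k b) (fun (_ : Finset (ℕ × ℕ)) => True) = {∅} := by
      apply triR_singleton _ trivial
      have hsub : Sout (Sout S a k) k b ⊆ {a, k, b} := by
        intro c hc
        simp only [Sout, mem_filter] at hc
        obtain ⟨⟨hcS, hc1⟩, hc2⟩ := hc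
        have h1 := hmin c hcS
        have h2 := hmax c hcS
        simp only [mem_insert, mem_singleton]
        omega
      exact (card_le_card hsub).trans (card3 a k b)
    rw [split_card1 (Sout S a k) k b hdiagR, e2, e3]
    simp


/-- The rank function `k ↦ #{c ∈ S | c < k}` maps `S` onto `range S.card`. -/
lemma rank_image (S : Finset ℕ) :
    S.image (fun k => (S.filter (fun c => c < k)).card) = range S.card := by
  induction S using Finset.induction_on_max with
  | empty => simp
  | insert a s ha ih =>
    have hanotin : a ∉ s := fun h => lt_irrefl a (ha a h)
    rw [image_insert]
    have h1 : ((insert a s).filter (fun c => c < a)).card = s.card := by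
      rw [filter_insert, if_neg (lt_irrefl a), filter_true_of_mem ha]
    have h2 : s.image (fun k => ((insert a s).filter (fun c => c < k)).card)
        = s.image (fun k => (s.filter (fun c => c < k)).card) := by
      apply image_congr
      intro k hk
      have hk' : k ∈ s := hk
      show ((insert a s).filter (fun c => c < k)).card = (s.filter (fun c => c < k)).card
      rw [filter_insert, if_neg (by have := ha k hk'; omega)]
    rw [h1, h2, ih, card_insert_of_notMem hanotin, range_add_one]

lemma rank_strictMono {S : Finset ℕ} {k k' : ℕ} (hk : k ∈ S) (hlt : k < k') :
    (S.filter (fun c => c < k)).card < (S.filter (fun c => c < k')).card := by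
  apply card_lt_card
  constructor
  · intro c hc
    simp only [mem_filter] at hc ⊢
    exact ⟨hc.1, by omega⟩
  · intro hsub
    have := hsub (mem_filter.2 ⟨hk, hlt⟩)
    simp only [mem_filter] at this
    omega

/-- Unrestricted triangulation counts are Catalan numbers. -/
lemma count_free : ∀ (N : ℕ) (S : Finset ℕ), S.card ≤ N → 2 ≤ S.card →
    (triQ S (fun _ => True)).card = catalan (S.card - 2) := by
  intro N
  induction N with
  | zero => intro S h1 h2; omega
  | succ N ih =>
    intro S hN h2
    by_cases h3 : S.card ≤ 3
    · have he : triQ S (fun _ => True) = {∅} := triR_singleton h3 (by simp)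
      rw [he]
      have : S.card - 2 = 0 ∨ S.card - 2 = 1 := by omega
      rcases this with h | h <;> rw [h] <;> simp [catalan_zero, catalan_one]
    · push_neg at h3
      have hne : S.Nonempty := card_pos.1 (by omega)
      set a := S.min' hne with hadef
      set b := S.max' hne with hbdef
      have ha : a ∈ S := min'_mem _ _
      have hb : b ∈ S := max'_mem _ _
      have hmin : ∀ c ∈ S, a ≤ c := fun c hc => min'_le _ _ hc
      have hmax : ∀ c ∈ S, c ≤ b := fun c hc => le_max' _ _ hc
      have hab : a < b := by
        rcases Finset.exists_mem_ne (show 1 < S.card by omega) a with ⟨c, hc, hca⟩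
        have h1 := hmin c hc
        have h2 := hmax c hc
        omega
      rw [recur_free (by omega) ha hb hmin hmax]
      have hrb : (S.filter (fun c => c < b)).card = S.card - 1 := by
        have : S.filter (fun c => c < b) = S.erase b := by
          ext c
          simp only [mem_filter, mem_erase]
          constructor
          · rintro ⟨hc, hlt⟩; exact ⟨by omega, hc⟩
          · rintro ⟨hne', hc⟩; exact ⟨hc, lt_of_le_of_ne (hmax c hc) hne'⟩
        rw [this, card_erase_of_mem hb]
      have hra : (S.filter (fun c => c < a)).card = 0 := by
        rw [card_eq_zero, filter_eq_empty_iff]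
        intro c hc
        have := hmin c hc
        omega
      have key : ∀ k ∈ S.filter (fun c => a < c ∧ c < b),
          (triQ (Sin S a k) (fun _ => True)).card *
            (triQ (Sin S k b) (fun _ => True)).card
          = catalan ((S.filter (fun c => c < k)).card - 1) *
            catalan (S.card - (S.filter (fun c => c < k)).card - 2) := by
        intro k hk
        simp only [mem_filter] at hk
        obtain ⟨hkS, hak, hkb⟩ := hk
        set r := (S.filter (fun c => c < k)).card with hrdef
        have hr1 : 1 ≤ r := by
          have : a ∈ S.filter (fun c => c < k) := mem_filter.2 ⟨ha, hak⟩
          have := card_pos.2 ⟨a, this⟩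
          omega
        have hrub : r < S.card - 1 := by
          have := rank_strictMono hkS hkb
          omega
        have hsin1 : Sin S a k = insert k (S.filter (fun c => c < k)) := by
          ext c
          simp only [Sin, mem_filter, mem_insert]
          constructor
          · rintro ⟨hc, -, hck⟩
            rcases eq_or_lt_of_le hck with h | h
            · exact Or.inl h
            · exact Or.inr ⟨hc, h⟩
          · rintro (rfl | ⟨hc, h⟩)
            · exact ⟨hkS, by omega, le_refl _⟩
            · exact ⟨hc, hmin c hc, by omega⟩
        have hc1 : (Sin S a k).card = r + 1 := by
          rw [hsin1, card_insert_of_notMem (by simp only [mem_filter]; omega)]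
        have hc2 : (Sin S k b).card = S.card - r := by
          have heq : Sin S k b = S.filter (fun c => ¬ c < k) := by
            ext c
            simp only [Sin, mem_filter]
            constructor
            · rintro ⟨hc, h1, -⟩; exact ⟨hc, by omega⟩
            · rintro ⟨hc, h1⟩; exact ⟨hc, by omega, hmax c hc⟩
          have := card_filter_add_card_filter_not (s := S) (p := fun c => c < k)
          rw [heq]
          omega
        have hlt1 : (Sin S a k).card ≤ N := by
          have : b ∉ Sin S a k := by
            simp only [Sin, mem_filter]
            omega
          have hss : Sin S a k ⊂ S := ⟨filter_subset _ _, fun hsub => this (hsub hb)⟩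
          have := card_lt_card hss
          omega
        have hlt2 : (Sin S k b).card ≤ N := by
          have : a ∉ Sin S k b := by
            simp only [Sin, mem_filter]
            omega
          have hss : Sin S k b ⊂ S := ⟨filter_subset _ _, fun hsub => this (hsub ha)⟩
          have := card_lt_card hss
          omega
        rw [ih _ hlt1 (by omega), ih _ hlt2 (by omega), hc1, hc2]
        have : r + 1 - 2 = r - 1 := by omega
        rw [this]
      rw [sum_congr rfl key]
      have hbij : ∑ k ∈ S.filter (fun c => a < c ∧ c < b),
          catalan ((S.filter (fun c => c < k)).card - 1) *
            catalan (S.card - (S.filter (fun c => c < k)).card - 2)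
          = ∑ r ∈ range (S.card - 2), catalan r * catalan (S.card - 3 - r) := by
        apply sum_bij (i := fun k _ => (S.filter (fun c => c < k)).card - 1)
        · intro k hk
          simp only [mem_filter] at hk
          have h1 : 1 ≤ (S.filter (fun c => c < k)).card :=
            card_pos.2 ⟨a, mem_filter.2 ⟨ha, hk.2.1⟩⟩
          have h2 := rank_strictMono hk.1 hk.2.2
          rw [mem_range]
          omega
        · intro k hk k' hk' heq
          simp only [mem_filter] at hk hk'
          have h1 : 1 ≤ (S.filter (fun c => c < k)).card :=
            card_pos.2 ⟨a, mem_filter.2 ⟨ha, hk.2.1⟩⟩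
          have h1' : 1 ≤ (S.filter (fun c => c < k')).card :=
            card_pos.2 ⟨a, mem_filter.2 ⟨ha, hk'.2.1⟩⟩
          by_contra hne
          rcases Nat.lt_or_ge k k' with h | h
          · have := rank_strictMono hk.1 h; omega
          · have hlt : k' < k := by omega
            have := rank_strictMono hk'.1 hlt; omega
        · intro r hr
          rw [mem_range] at hr
          have hmem : r + 1 ∈ range S.card := mem_range.2 (by omega)
          rw [← rank_image, mem_image] at hmem
          obtain ⟨k, hkS, hkr⟩ := hmem
          have hka : a < k := by
            have h0 := hmin k hkS
            by_contra hcon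
            have hk : k = a := by omega
            rw [hk, hra] at hkr
            omega
          have hkb : k < b := by
            have h0 := hmax k hkS
            by_contra hcon
            have hk : k = b := by omega
            rw [hk, hrb] at hkr
            omega
          exact ⟨k, mem_filter.2 ⟨hkS, hka, hkb⟩,
            show (S.filter (fun c => c < k)).card - 1 = r by omega⟩
        · intro k hk
          simp only [mem_filter] at hk
          have h1 : 1 ≤ (S.filter (fun c => c < k)).card :=
            card_pos.2 ⟨a, mem_filter.2 ⟨ha, hk.2.1⟩⟩
          have heq : S.card - 3 - ((S.filter (fun c => c < k)).card - 1)
              = S.card - (S.filter (fun c => c < k)).card - 2 := by omega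
          rw [heq]
      rw [hbij]
      have hcs : catalan (S.card - 3 + 1)
          = ∑ r ∈ range (S.card - 3 + 1), catalan r * catalan (S.card - 3 - r) := by
        rw [catalan_succ', Finset.Nat.sum_antidiagonal_eq_sum_range_succ_mk]
      have h4 : S.card - 3 + 1 = S.card - 2 := by omega
      rw [h4] at hcs
      rw [← hcs]


/-- Parity splitting of the Catalan convolution. -/
lemma cat_id (t : ℕ) :
    catalan (2 * t + 2) = 2 * ∑ s ∈ range (t + 1), catalan (2 * s + 1) * catalan (2 * t - 2 * s) := by
  have h0 : catalan (2 * t + 2)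
      = ∑ k ∈ range (2 * t + 2), catalan k * catalan (2 * t + 1 - k) := by
    have : 2 * t + 2 = (2 * t + 1) + 1 := by ring
    rw [this, catalan_succ', Finset.Nat.sum_antidiagonal_eq_sum_range_succ_mk]
  have hsplit := sum_filter_add_sum_filter_not (range (2 * t + 2)) (fun k => k % 2 = 1)
    (fun k => catalan k * catalan (2 * t + 1 - k))
  have heo : ∑ k ∈ (range (2 * t + 2)).filter (fun k => ¬ k % 2 = 1),
        catalan k * catalan (2 * t + 1 - k)
      = ∑ k ∈ (range (2 * t + 2)).filter (fun k => k % 2 = 1),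
        catalan k * catalan (2 * t + 1 - k) := by
    apply sum_nbij' (i := fun k => 2 * t + 1 - k) (j := fun k => 2 * t + 1 - k)
    · intro k hk
      simp only [mem_filter, mem_range] at hk ⊢
      omega
    · intro k hk
      simp only [mem_filter, mem_range] at hk ⊢
      omega
    · intro k hk
      simp only [mem_filter, mem_range] at hk
      omega
    · intro k hk
      simp only [mem_filter, mem_range] at hk
      omega
    · intro k hk
      simp only [mem_filter, mem_range] at hk
      have h1 : 2 * t + 1 - (2 * t + 1 - k) = k := by omega
      rw [h1, mul_comm]
  have hodd : ∑ k ∈ (range (2 * t + 2)).filter (fun k => k % 2 = 1),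
        catalan k * catalan (2 * t + 1 - k)
      = ∑ s ∈ range (t + 1), catalan (2 * s + 1) * catalan (2 * t - 2 * s) := by
    apply sum_nbij' (i := fun k => k / 2) (j := fun s => 2 * s + 1)
    · intro k hk
      simp only [mem_filter, mem_range] at hk ⊢
      omega
    · intro s hs
      simp only [mem_filter, mem_range] at hs ⊢
      omega
    · intro k hk
      simp only [mem_filter, mem_range] at hk
      omega
    · intro s hs
      simp only [mem_range] at hs
      omega
    · intro k hk
      simp only [mem_filter, mem_range] at hk
      have h1 : 2 * (k / 2) + 1 = k := by omega
      have h2 : 2 * t - 2 * (k / 2) = 2 * t + 1 - k := by omega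
      rw [h1, h2]
  rw [h0, ← hsplit, heo, hodd]
  ring


/-! ### The specific setting -/

def Ov (n i : ℕ) : Finset ℕ := range (i + 1) ∪ Icc (2 * n + 3 - i) (2 * n + 1)

def Mv (n j i : ℕ) : Finset ℕ := Icc j i ∪ Icc (2 * n + 3 - i) (2 * n + 3 - j)

def Pn (n : ℕ) : ℕ × ℕ → Prop := fun e => (e.1 + e.2) % (2 * n + 2) ≠ 1

lemma mem_Ov {n i c : ℕ} : c ∈ Ov n i ↔ (c ≤ i ∨ (2 * n + 3 - i ≤ c ∧ c ≤ 2 * n + 1)) := by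
  simp [Ov, mem_union, mem_range, mem_Icc, Nat.lt_succ_iff]

lemma card_Ov {n i : ℕ} (h2 : 2 ≤ i) (hi : i ≤ n + 1) : (Ov n i).card = 2 * i := by
  have hd : Disjoint (range (i + 1)) (Icc (2 * n + 3 - i) (2 * n + 1)) := by
    rw [disjoint_left]
    intro c hc hc'
    rw [mem_range] at hc
    rw [mem_Icc] at hc'
    omega
  rw [Ov, card_union_of_disjoint hd, card_range, Nat.card_Icc]
  omega

lemma card_Mv {n j i : ℕ} (hj : 2 ≤ j) (hji : j < i) (hi : i ≤ n + 1) :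
    (Mv n j i).card = 2 * (i - j) + 2 := by
  have hd : Disjoint (Icc j i) (Icc (2 * n + 3 - i) (2 * n + 3 - j)) := by
    rw [disjoint_left]
    intro c hc hc'
    rw [mem_Icc] at hc hc'
    omega
  rw [Mv, card_union_of_disjoint hd, Nat.card_Icc, Nat.card_Icc]
  omega

lemma mod_val {n s : ℕ} (hs : s % (2 * n + 2) = 1) (hub : s ≤ 4 * n + 2) :
    s = 1 ∨ s = 2 * n + 3 := by
  have h0 := Nat.div_add_mod s (2 * n + 2)
  set q := s / (2 * n + 2) with hq
  have hq1 : q ≤ 1 := by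
    by_contra h
    push_neg at h
    have h2 : 2 ≤ q := h
    have := Nat.mul_le_mul_left (2 * n + 2) h2
    omega
  interval_cases q <;> omega

lemma vert_sum_mod {n l : ℕ} (h2 : 2 ≤ l) (hl : l ≤ n + 1) :
    (l + (2 * n + 3 - l)) % (2 * n + 2) = 1 := by
  have h1 : l + (2 * n + 3 - l) = (2 * n + 2) + 1 := by omega
  rw [h1, Nat.add_mod_left, Nat.mod_eq_of_lt (by omega)]

/-- Characterization of the `P`-violating chords of the annulus `Ov n i`. -/
lemma viol {n i : ℕ} (h2 : 2 ≤ i) (hi : i ≤ n + 1) {e : ℕ × ℕ}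
    (hd : Diag (Ov n i) e) (hP : (e.1 + e.2) % (2 * n + 2) = 1) :
    2 ≤ e.1 ∧ e.1 ≤ i - 1 ∧ e.2 = 2 * n + 3 - e.1 := by
  obtain ⟨h1, h2', ⟨c, hc, hc1, hc2⟩, -⟩ := hd
  rw [mem_Ov] at h1 h2' hc
  have hub : e.1 + e.2 ≤ 4 * n + 2 := by omega
  rcases mod_val hP hub with hs | hs
  · omega
  · omega

lemma vert_diag {n i j : ℕ} (h2 : 2 ≤ j) (hji : j ≤ i - 1) (h2i : 2 ≤ i) (hi : i ≤ n + 1) :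
    Diag (Ov n i) (j, 2 * n + 3 - j) := by
  refine ⟨?_, ?_, ⟨j + 1, ?_, by omega, by omega⟩, Or.inl ⟨0, ?_, by omega⟩⟩ <;>
    rw [mem_Ov] <;> omega

lemma sin_Ov {n i j : ℕ} (h2 : 2 ≤ j) (hji : j ≤ i - 1) (h2i : 2 ≤ i) (hi : i ≤ n + 1) :
    Sin (Ov n i) j (2 * n + 3 - j) = Mv n j i := by
  ext c
  simp only [Sin, mem_filter, mem_Ov, Mv, mem_union, mem_Icc]
  omega

lemma sout_Ov {n i j : ℕ} (h2 : 2 ≤ j) (hji : j ≤ i - 1) (h2i : 2 ≤ i) (hi : i ≤ n + 1) :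
    Sout (Ov n i) j (2 * n + 3 - j) = Ov n j := by
  ext c
  simp only [Sout, mem_filter, mem_Ov]
  omega

def gcount (n i : ℕ) : ℕ := (triQ (Ov n i) (Pn n)).card

/-- The master recursion. -/
lemma grec {n i : ℕ} (h2 : 2 ≤ i) (hi : i ≤ n + 1) :
    catalan (2 * i - 2)
      = gcount n i + ∑ j ∈ Icc 2 (i - 1), catalan (2 * (i - j)) * gcount n j := by
  classical
  have hcardO : (Ov n i).card = 2 * i := card_Ov h2 hi
  have htot : (triQ (Ov n i) (fun _ => True)).card = catalan (2 * i - 2) := by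
    rw [count_free (Ov n i).card (Ov n i) (le_refl _) (by omega), hcardO]
  set Bj : ℕ → Finset (Finset (ℕ × ℕ)) := fun j =>
    triR (Ov n i) (fun T => (j, 2 * n + 3 - j) ∈ T ∧
      ∀ l ∈ Icc 2 (j - 1), (l, 2 * n + 3 - l) ∉ T) with hBj
  have hcover : triQ (Ov n i) (fun _ => True)
      = triQ (Ov n i) (Pn n) ∪ (Icc 2 (i - 1)).biUnion Bj := by
    ext T
    simp only [hBj, mem_union, mem_biUnion, mem_triQ, mem_triR]
    constructor
    · rintro ⟨hTri, -⟩
      by_cases hJ : ((Icc 2 (i - 1)).filter (fun j => (j, 2 * n + 3 - j) ∈ T)).Nonempty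
      · right
        set j0 := ((Icc 2 (i - 1)).filter (fun j => (j, 2 * n + 3 - j) ∈ T)).min' hJ with hj0
        have hj0mem := min'_mem _ hJ
        rw [mem_filter] at hj0mem
        refine ⟨j0, hj0mem.1, hTri, hj0mem.2, ?_⟩
        intro l hl hcon
        rw [mem_Icc] at hl hj0mem
        have : l ∈ (Icc 2 (i - 1)).filter (fun j => (j, 2 * n + 3 - j) ∈ T) :=
          mem_filter.2 ⟨mem_Icc.2 (by omega), hcon⟩
        have := min'_le _ _ this
        omega
      · left
        refine ⟨hTri, ?_⟩
        intro e he
        by_contra hPe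
        simp only [Pn, not_not] at hPe
        obtain ⟨hv1, hv2, hv3⟩ := viol h2 hi (hTri.1 e he) hPe
        apply hJ
        refine ⟨e.1, mem_filter.2 ⟨mem_Icc.2 ⟨hv1, hv2⟩, ?_⟩⟩
        have : e = (e.1, 2 * n + 3 - e.1) := by
          rw [← hv3]
        rw [← this]
        exact he
    · rintro (⟨hTri, -⟩ | ⟨j, -, hTri, -⟩) <;> exact ⟨hTri, fun _ _ => trivial⟩
  have hPviol : ∀ j, 2 ≤ j → j ≤ n + 1 → ¬ Pn n (j, 2 * n + 3 - j) := by
    intro j hj1 hj2 hcon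
    exact hcon (vert_sum_mod hj1 hj2)
  have hdisj1 : Disjoint (triQ (Ov n i) (Pn n)) ((Icc 2 (i - 1)).biUnion Bj) := by
    rw [disjoint_left]
    intro T hT hT'
    rw [mem_triQ] at hT
    rw [mem_biUnion] at hT'
    obtain ⟨j, hj, hTB⟩ := hT'
    simp only [hBj] at hTB
    rw [mem_triR] at hTB
    rw [mem_Icc] at hj
    exact hPviol j hj.1 (by omega) (hT.2 _ hTB.2.1)
  have hdisj2 : ∀ j ∈ Icc 2 (i - 1), ∀ j' ∈ Icc 2 (i - 1), j ≠ j' →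
      Disjoint (Bj j) (Bj j') := by
    have key : ∀ j ∈ Icc 2 (i - 1), ∀ j' ∈ Icc 2 (i - 1), j < j' →
        Disjoint (Bj j) (Bj j') := by
      intro j hj j' hj' hlt
      rw [disjoint_left]
      intro T hT hT'
      simp only [hBj] at hT hT'
      rw [mem_triR] at hT hT'
      rw [mem_Icc] at hj hj'
      exact hT'.2.2 j (mem_Icc.2 (by omega)) hT.2.1
    intro j hj j' hj' hne
    rcases Nat.lt_or_ge j j' with h | h
    · exact key j hj j' hj' h
    · exact (key j' hj' j hj (by omega)).symm
  have hcards : (triQ (Ov n i) (fun _ => True)).card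
      = gcount n i + ∑ j ∈ Icc 2 (i - 1), (Bj j).card := by
    rw [hcover, card_union_of_disjoint hdisj1, card_biUnion hdisj2]
    rfl
  have hBcard : ∀ j ∈ Icc 2 (i - 1), (Bj j).card = catalan (2 * (i - j)) * gcount n j := by
    intro j hj
    rw [mem_Icc] at hj
    obtain ⟨hj2, hji⟩ := hj
    have hdiag : Diag (Ov n i) (j, 2 * n + 3 - j) := vert_diag hj2 hji h2 hi
    have e0 : Bj j = triR (Ov n i) (fun T => (j, 2 * n + 3 - j) ∈ T ∧
        ((∀ e ∈ Tin T j (2 * n + 3 - j), (fun (_ : ℕ × ℕ) => True) e) ∧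
          (fun T2 => ∀ e ∈ T2, Pn n e) (Tout T j (2 * n + 3 - j)))) := by
      apply triR_congr
      intro T hTri
      simp only
      constructor
      · rintro ⟨hmem, havoid⟩
        refine ⟨hmem, fun _ _ => trivial, ?_⟩
        intro e he
        by_contra hPe
        simp only [Pn, not_not] at hPe
        have heT : e ∈ T := tout_subset he
        obtain ⟨hv1, hv2, hv3⟩ := viol h2 hi (hTri.1 e heT) hPe
        simp only [Tout, mem_filter] at he
        have hlj : e.1 < j := by omega
        apply havoid e.1 (mem_Icc.2 ⟨hv1, by omega⟩)
        have : e = (e.1, 2 * n + 3 - e.1) := by rw [← hv3]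
        rw [← this]
        exact heT
      · rintro ⟨hmem, -, hPout⟩
        refine ⟨hmem, ?_⟩
        intro l hl hcon
        rw [mem_Icc] at hl
        have hlout : (l, 2 * n + 3 - l) ∈ Tout T j (2 * n + 3 - j) := by
          simp only [Tout, mem_filter]
          exact ⟨hcon, (by omega : ¬(j ≤ l ∧ 2 * n + 3 - l ≤ 2 * n + 3 - j))⟩
        exact hPviol l hl.1 (by omega) (hPout _ hlout)
    have hsplit : (triR (Ov n i) (fun T => (j, 2 * n + 3 - j) ∈ T ∧
        ((∀ e ∈ Tin T j (2 * n + 3 - j), (fun (_ : ℕ × ℕ) => True) e) ∧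
          (fun T2 => ∀ e ∈ T2, Pn n e) (Tout T j (2 * n + 3 - j))))).card
        = (triQ (Sin (Ov n i) j (2 * n + 3 - j)) (fun _ => True)).card
          * (triR (Sout (Ov n i) j (2 * n + 3 - j)) (fun T2 => ∀ e ∈ T2, Pn n e)).card :=
      split_card (Ov n i) j (2 * n + 3 - j) hdiag (fun _ => True) (fun T2 => ∀ e ∈ T2, Pn n e)
    rw [e0, hsplit, sin_Ov hj2 hji h2 hi, sout_Ov hj2 hji h2 hi]
    have hMcard : (Mv n j i).card = 2 * (i - j) + 2 := card_Mv hj2 (by omega) hi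
    have hfree : (triQ (Mv n j i) (fun _ => True)).card = catalan (2 * (i - j)) := by
      rw [count_free (Mv n j i).card (Mv n j i) (le_refl _) (by omega), hMcard]
      congr 1 <;> omega
    rw [hfree]
    rfl
  rw [← htot, hcards, sum_congr rfl hBcard]


lemma gval {n : ℕ} (hn : 1 ≤ n) : ∀ t, t ≤ n - 1 → gcount n (t + 2) = 2 * catalan (2 * t + 1) := by
  intro t
  induction t using Nat.strong_induction_on with
  | _ t ih =>
    intro ht
    have hrec := grec (n := n) (i := t + 2) (by omega) (by omega)
    have hidx : 2 * (t + 2) - 2 = 2 * t + 2 := by omega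
    rw [hidx] at hrec
    have hsum : ∑ j ∈ Icc 2 (t + 2 - 1), catalan (2 * ((t + 2) - j)) * gcount n j
        = ∑ s ∈ range t, 2 * (catalan (2 * s + 1) * catalan (2 * t - 2 * s)) := by
      have h1 : Icc 2 (t + 2 - 1) = Icc 2 (t + 1) := by congr 1
      rw [h1]
      apply sum_nbij' (i := fun j => j - 2) (j := fun s => s + 2)
      · intro j hj; rw [mem_Icc] at hj; rw [mem_range]; omega
      · intro s hs; rw [mem_range] at hs; rw [mem_Icc]; omega
      · intro j hj; rw [mem_Icc] at hj; omega
      · intro s hs; omega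
      · intro j hj
        rw [mem_Icc] at hj
        have e1 : gcount n j = 2 * catalan (2 * (j - 2) + 1) := by
          have hih := ih (j - 2) (by omega) (by omega)
          rw [show j = j - 2 + 2 by omega]
          exact hih
        have e2 : 2 * ((t + 2) - j) = 2 * t - 2 * (j - 2) := by omega
        rw [e1, e2]
        ring
    rw [hsum, ← mul_sum] at hrec
    have hcat := cat_id t
    rw [sum_range_succ] at hcat
    have h0 : 2 * t - 2 * t = 0 := by omega
    rw [h0, catalan_zero, mul_one, mul_add] at hcat
    omega

lemma diag_iff {m : ℕ} (hm : 2 ≤ m) (e : ℕ × ℕ) :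
    Diag (range m) e ↔ IsPolygonDiagonal m e := by
  constructor
  · rintro ⟨h1, h2, ⟨c, hc, hc1, hc2⟩, hb⟩
    rw [mem_range] at h1 h2
    rw [mem_range] at hc
    refine ⟨by omega, h2, by omega, ?_⟩
    rintro ⟨he1, he2⟩
    rcases hb with ⟨v, hv, hvlt⟩ | ⟨v, hv, hvgt⟩ <;> rw [mem_range] at hv <;> omega
  · rintro ⟨hlt, h2m, h12, hne⟩
    refine ⟨mem_range.2 (by omega), mem_range.2 h2m,
      ⟨e.1 + 1, mem_range.2 (by omega), by omega, by omega⟩, ?_⟩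
    by_cases h0 : e.1 = 0
    · refine Or.inr ⟨m - 1, mem_range.2 (by omega), ?_⟩
      have : ¬ e.2 = m - 1 := fun h => hne ⟨h0, h⟩
      omega
    · exact Or.inl ⟨0, mem_range.2 (by omega), by omega⟩

lemma isTri_iff {m : ℕ} (hm : 2 ≤ m) (T : Finset (ℕ × ℕ)) :
    IsTri (range m) T ↔ IsTriangulation m T := by
  unfold IsTri IsTriangulation
  rw [card_range]
  constructor
  · rintro ⟨h1, h2, h3⟩
    exact ⟨fun e he => (diag_iff hm e).1 (h1 e he), h2, h3⟩
  · rintro ⟨h1, h2, h3⟩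
    exact ⟨fun e he => (diag_iff hm e).2 (h1 e he), h2, h3⟩

end
end AvoidParallel

theorem count_triangulations_avoiding_parallel_to_01_even (n : ℕ) (hn : 1 ≤ n) :
    {T : Finset (ℕ × ℕ) | IsTriangulation (2 * n + 2) T ∧
        ∀ e ∈ T, (e.1 + e.2) % (2 * n + 2) ≠ 1}.ncard =
      2 * catalan (2 * n - 1) := by
  classical
  have hOv : AvoidParallel.Ov n (n + 1) = Finset.range (2 * n + 2) := by
    ext c
    rw [AvoidParallel.mem_Ov, Finset.mem_range]
    omega
  have hset : {T : Finset (ℕ × ℕ) | IsTriangulation (2 * n + 2) T ∧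
      ∀ e ∈ T, (e.1 + e.2) % (2 * n + 2) ≠ 1}
      = ↑(AvoidParallel.triQ (AvoidParallel.Ov n (n + 1)) (AvoidParallel.Pn n)) := by
    ext T
    simp only [Set.mem_setOf_eq, Finset.mem_coe, AvoidParallel.mem_triQ, hOv]
    rw [AvoidParallel.isTri_iff (by omega)]
    rfl
  rw [hset, Set.ncard_coe_finset]
  have hval := AvoidParallel.gval hn (n - 1) (le_refl _)
  rw [show n - 1 + 2 = n + 1 by omega] at hval
  rw [show (2 : ℕ) * (n - 1) + 1 = 2 * n - 1 by omega] at hval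
  exact hval
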